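/- Let X, Y be Banach spaces and let Z ⊆ L(X,Y) be an operator ideal, i.e., a closed subspace containing all finite-rank operators such that A∘T∘B ∈ Z whenever A ∈ L(Y), T ∈ Z, B ∈ L(X). Then, endowing Z with the operator norm, n(Z) ≤ min{ n(X), n(Y) }. -/

import Mathlib

open Metric Set

/-- The numerical radius of a bounded linear operator `T` on a normed space `X` over `𝕜`:
`v(T) = sup { ‖x*(Tx)‖ : x ∈ S_X, x* ∈ S_{X*}, x*(x) = 1 }`. -/
noncomputable def numRadius (𝕜 : Type*) [RCLike 𝕜] {X : Type*} [NormedAddCommGroup X]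
    [NormedSpace 𝕜 X] (T : X →L[𝕜] X) : ℝ :=
  sSup {r : ℝ | ∃ (x : X) (f : X →L[𝕜] 𝕜), ‖x‖ = 1 ∧ ‖f‖ = 1 ∧ f x = 1 ∧ r = ‖f (T x)‖}

/-- The numerical index of a normed space: `n(X) = inf { v(T) : T ∈ L(X), ‖T‖ = 1 }`. -/
noncomputable def numIndex (𝕜 : Type*) [RCLike 𝕜] (X : Type*) [NormedAddCommGroup X]
    [NormedSpace 𝕜 X] : ℝ :=
  sInf {r : ℝ | ∃ T : X →L[𝕜] X, ‖T‖ = 1 ∧ r = numRadius 𝕜 T}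

/-- `v_δ(T)` computed with points taken in `A ⊆ B_X` and functionals in `B ⊆ B_{X*}`. -/
noncomputable def numRadiusDeltaOn (𝕜 : Type*) [RCLike 𝕜] {X : Type*} [NormedAddCommGroup X]
    [NormedSpace 𝕜 X] (T : X →L[𝕜] X) (A : Set X) (B : Set (X →L[𝕜] 𝕜)) (δ : ℝ) : ℝ :=
  sSup {r : ℝ | ∃ x ∈ A, ∃ f ∈ B, 1 - δ < RCLike.re (f x) ∧ r = ‖f (T x)‖}

/-- `Z` (together with the bounded bilinear map `t`) is the projective tensor product
`X ⊗̂_π Y`: it is complete, elementary tensors have norm `‖x‖‖y‖`, and the closed unit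
ball of `Z` is the closed convex hull of `B_X ⊗ B_Y`. -/
structure IsProjectiveTensorProduct (𝕜 : Type*) [RCLike 𝕜] {X Y Z : Type*}
    [NormedAddCommGroup X] [NormedSpace 𝕜 X] [NormedAddCommGroup Y] [NormedSpace 𝕜 Y]
    [NormedAddCommGroup Z] [NormedSpace 𝕜 Z] [NormedSpace ℝ Z] [IsScalarTower ℝ 𝕜 Z]
    (t : X →L[𝕜] Y →L[𝕜] Z) : Prop where
  complete : CompleteSpace Z
  norm_tmul : ∀ x y, ‖t x y‖ = ‖x‖ * ‖y‖
  ball_eq : closedBall (0 : Z) 1 = closure (convexHull ℝ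
      {z : Z | ∃ x ∈ closedBall (0 : X) 1, ∃ y ∈ closedBall (0 : Y) 1, z = t x y})

/-- `Z` (together with the bounded bilinear map `t`) is the injective tensor product
`X ⊗̂_ε Y`: it is complete, the span of elementary tensors is dense, and on that span
the norm is the injective tensor norm. -/
structure IsInjectiveTensorProduct (𝕜 : Type*) [RCLike 𝕜] {X Y Z : Type*}
    [NormedAddCommGroup X] [NormedSpace 𝕜 X] [NormedAddCommGroup Y] [NormedSpace 𝕜 Y]
    [NormedAddCommGroup Z] [NormedSpace 𝕜 Z] (t : X →L[𝕜] Y →L[𝕜] Z) : Prop where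
  complete : CompleteSpace Z
  dense_span : Dense (Submodule.span 𝕜 {z : Z | ∃ x y, z = t x y} : Set Z)
  norm_sum : ∀ (n : ℕ) (x : Fin n → X) (y : Fin n → Y),
    ‖∑ i, t (x i) (y i)‖ = sSup {r : ℝ | ∃ (f : X →L[𝕜] 𝕜) (g : Y →L[𝕜] 𝕜),
      ‖f‖ ≤ 1 ∧ ‖g‖ ≤ 1 ∧ r = ‖∑ i, f (x i) * g (y i)‖}

/-- A slice of a bounded set `A`: `{a ∈ A : Re f(a) > sup Re f(A) - δ}`. -/
def sliceOf (𝕜 : Type*) [RCLike 𝕜] {X : Type*} [NormedAddCommGroup X] [NormedSpace 𝕜 X]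
    (A : Set X) (f : X →L[𝕜] 𝕜) (δ : ℝ) : Set X :=
  {a ∈ A | sSup {r : ℝ | ∃ b ∈ A, r = RCLike.re (f b)} - δ < RCLike.re (f a)}

/-- A set `A` is slicely countably determined (SCD) if there is a countable determining
family of slices of `A`: any `B ⊆ A` meeting every slice of the family has
closed convex hull containing `A`. -/
def IsSCD (𝕜 : Type*) [RCLike 𝕜] {X : Type*} [NormedAddCommGroup X] [NormedSpace 𝕜 X]
    [NormedSpace ℝ X] [IsScalarTower ℝ 𝕜 X] (A : Set X) : Prop :=
  ∃ V : ℕ → Set X, (∀ n, ∃ (f : X →L[𝕜] 𝕜) (δ : ℝ), 0 < δ ∧ V n = sliceOf 𝕜 A f δ) ∧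
    ∀ B ⊆ A, (∀ n, (B ∩ V n).Nonempty) → A ⊆ closure (convexHull ℝ B)

/-- The Daugavet property: `‖Id + T‖ = 1 + ‖T‖` for every rank-one operator `T`. -/
def DaugavetProperty (𝕜 : Type*) [RCLike 𝕜] (X : Type*) [NormedAddCommGroup X]
    [NormedSpace 𝕜 X] : Prop :=
  ∀ T : X →L[𝕜] X, (∃ (f : X →L[𝕜] 𝕜) (x₀ : X), ∀ x, T x = f x • x₀) →
    ‖ContinuousLinearMap.id 𝕜 X + T‖ = 1 + ‖T‖

set_option maxHeartbeats 2000000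
set_option linter.unusedSectionVars false

section Aux

variable {𝕜 : Type*} [RCLike 𝕜] {X : Type*} [NormedAddCommGroup X] [NormedSpace 𝕜 X]

lemma numRadius_mem_le (T : X →L[𝕜] X) {r : ℝ}
    (hr : r ∈ {r : ℝ | ∃ (x : X) (f : X →L[𝕜] 𝕜), ‖x‖ = 1 ∧ ‖f‖ = 1 ∧ f x = 1 ∧ r = ‖f (T x)‖}) :
    r ≤ ‖T‖ := by
  obtain ⟨x, f, hx, hf, -, rfl⟩ := hr
  calc ‖f (T x)‖ ≤ ‖f‖ * ‖T x‖ := f.le_opNorm _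
    _ ≤ 1 * (‖T‖ * ‖x‖) := by rw [hf]; exact mul_le_mul_of_nonneg_left (T.le_opNorm x) zero_le_one
    _ = ‖T‖ := by rw [hx]; ring

lemma numRadius_nonneg (T : X →L[𝕜] X) : 0 ≤ numRadius 𝕜 T :=
  Real.sSup_nonneg (by rintro r ⟨x, f, -, -, -, rfl⟩; positivity)

lemma numRadius_le_norm (T : X →L[𝕜] X) : numRadius 𝕜 T ≤ ‖T‖ :=
  Real.sSup_le (fun _ hr => numRadius_mem_le T hr) (norm_nonneg T)

lemma numIndex_nonneg (𝕜 : Type*) [RCLike 𝕜] (X : Type*) [NormedAddCommGroup X]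
    [NormedSpace 𝕜 X] : 0 ≤ numIndex 𝕜 X :=
  Real.sInf_nonneg (by rintro r ⟨T, -, rfl⟩; exact numRadius_nonneg T)

lemma numRadius_smul_unit (T : X →L[𝕜] X) {l : 𝕜} (hl : ‖l‖ = 1) :
    numRadius 𝕜 (l • T) = numRadius 𝕜 T := by
  unfold numRadius
  congr 1
  ext r
  have key : ∀ (x : X) (f : X →L[𝕜] 𝕜), ‖f ((l • T) x)‖ = ‖f (T x)‖ := fun x f => by
    rw [ContinuousLinearMap.smul_apply, map_smul, smul_eq_mul, norm_mul, hl, one_mul]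
  constructor
  · rintro ⟨x, f, h1, h2, h3, rfl⟩
    exact ⟨x, f, h1, h2, h3, key x f⟩
  · rintro ⟨x, f, h1, h2, h3, rfl⟩
    exact ⟨x, f, h1, h2, h3, (key x f).symm⟩

set_option maxHeartbeats 1000000 in
/-- Key estimate: `‖Id + s C‖ ≤ 1 + s v(C) + 2 s²` for `‖C‖ ≤ 1`, `0 < s < 1`. -/
lemma norm_id_add_smul_le (C : X →L[𝕜] X) (hC : ‖C‖ ≤ 1) {s : ℝ} (hs0 : 0 < s) (hs1 : s < 1) :
    ‖ContinuousLinearMap.id 𝕜 X + (s : 𝕜) • C‖ ≤ 1 + s * numRadius 𝕜 C + 2 * s ^ 2 := by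
  set v := numRadius 𝕜 C with hv
  have hv0 : 0 ≤ v := numRadius_nonneg C
  have hv1 : v ≤ 1 := (numRadius_le_norm C).trans hC
  have hbdd : BddAbove {r : ℝ | ∃ (x : X) (f : X →L[𝕜] 𝕜),
      ‖x‖ = 1 ∧ ‖f‖ = 1 ∧ f x = 1 ∧ r = ‖f (C x)‖} :=
    ⟨‖C‖, fun _ hr => numRadius_mem_le C hr⟩
  apply ContinuousLinearMap.opNorm_le_bound _ (by nlinarith)
  intro u
  by_cases hu : u = 0
  · simp [hu]
  set w : X := u + (s : 𝕜) • C u with hw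
  have happly : (ContinuousLinearMap.id 𝕜 X + (s : 𝕜) • C) u = w := by
    simp [hw]
  rw [happly]
  have hCu : ‖C u‖ ≤ ‖u‖ := by
    calc ‖C u‖ ≤ ‖C‖ * ‖u‖ := C.le_opNorm u
      _ ≤ 1 * ‖u‖ := mul_le_mul_of_nonneg_right hC (norm_nonneg u)
      _ = ‖u‖ := one_mul _
  have hs_norm : ‖(s : 𝕜)‖ = s := by
    rw [RCLike.norm_ofReal, abs_of_pos hs0]
  have hw_lower : (1 - s) * ‖u‖ ≤ ‖w‖ := by
    have := norm_sub_norm_le u ((- (s:𝕜)) • C u)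
    have h1 : ‖w‖ = ‖u - (-(s:𝕜)) • C u‖ := by
      congr 1
      simp [hw, sub_eq_add_neg]
    rw [h1]
    have h2 : ‖(-(s:𝕜)) • C u‖ = s * ‖C u‖ := by
      rw [norm_smul, norm_neg, hs_norm]
    calc (1 - s) * ‖u‖ = ‖u‖ - s * ‖u‖ := by ring
      _ ≤ ‖u‖ - s * ‖C u‖ := by nlinarith
      _ = ‖u‖ - ‖(-(s:𝕜)) • C u‖ := by rw [h2]
      _ ≤ ‖u - (-(s:𝕜)) • C u‖ := norm_sub_norm_le _ _
  have hw_ne : w ≠ 0 := by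
    intro h
    rw [h, norm_zero] at hw_lower
    have : ‖u‖ > 0 := norm_pos_iff.mpr hu
    nlinarith
  have hwpos : (0:ℝ) < ‖w‖ := norm_pos_iff.mpr hw_ne
  obtain ⟨f, hf1, hfw⟩ := exists_dual_vector 𝕜 w (norm_ne_zero_iff.mpr hw_ne)
  set x : X := ((‖w‖ : ℝ) : 𝕜)⁻¹ • w with hx
  have hwc : ((‖w‖ : ℝ) : 𝕜) ≠ 0 := by
    simpa using hwpos.ne'
  have hxnorm : ‖x‖ = 1 := by
    rw [hx, norm_smul, norm_inv, RCLike.norm_ofReal, abs_of_pos hwpos,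
      inv_mul_cancel₀ hwpos.ne']
  have hfx : f x = 1 := by
    rw [hx, map_smul, hfw, smul_eq_mul, inv_mul_cancel₀ hwc]
  have hmem : ‖f (C x)‖ ≤ v := le_csSup hbdd ⟨x, f, hxnorm, hf1, hfx, rfl⟩
  have hwx : w = ((‖w‖ : ℝ) : 𝕜) • x := by
    rw [hx, smul_inv_smul₀ hwc]
  have hfCw : ‖f (C w)‖ ≤ ‖w‖ * v := by
    have heq : f (C w) = ((‖w‖ : ℝ) : 𝕜) * f (C x) := by
      conv_lhs => rw [hwx]
      rw [map_smul, map_smul, smul_eq_mul]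
    rw [heq, norm_mul, RCLike.norm_ofReal, abs_of_pos hwpos]
    exact mul_le_mul_of_nonneg_left hmem hwpos.le
  -- main chain
  have hrew : ‖w‖ = RCLike.re (f w) := by rw [hfw, RCLike.ofReal_re]
  have hfwsplit : f w = f u + (s : 𝕜) * f (C u) := by
    rw [hw, map_add, map_smul, smul_eq_mul]
  have hCu_eq : C u = C w - (s : 𝕜) • C (C u) := by
    rw [hw, map_add, map_smul]
    abel
  have hCCu : ‖C (C u)‖ ≤ ‖u‖ := by
    calc ‖C (C u)‖ ≤ ‖C‖ * ‖C u‖ := C.le_opNorm _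
      _ ≤ 1 * ‖u‖ := by nlinarith [norm_nonneg (C u), norm_nonneg C]
      _ = ‖u‖ := one_mul _
  have hfCu_re : RCLike.re (f (C u)) ≤ ‖w‖ * v + s * ‖u‖ := by
    rw [hCu_eq, map_sub, map_smul, smul_eq_mul]
    calc RCLike.re (f (C w) - (s:𝕜) * f (C (C u)))
        ≤ ‖f (C w) - (s:𝕜) * f (C (C u))‖ := RCLike.re_le_norm _
      _ ≤ ‖f (C w)‖ + ‖(s:𝕜) * f (C (C u))‖ := norm_sub_le _ _
      _ ≤ ‖w‖ * v + s * ‖u‖ := by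
          rw [norm_mul, hs_norm]
          have : ‖f (C (C u))‖ ≤ ‖u‖ := by
            calc ‖f (C (C u))‖ ≤ ‖f‖ * ‖C (C u)‖ := f.le_opNorm _
              _ = ‖C (C u)‖ := by rw [hf1, one_mul]
              _ ≤ ‖u‖ := hCCu
          exact add_le_add hfCw (mul_le_mul_of_nonneg_left this hs0.le)
  have hfu : RCLike.re (f u) ≤ ‖u‖ := by
    calc RCLike.re (f u) ≤ ‖f u‖ := RCLike.re_le_norm _
      _ ≤ ‖f‖ * ‖u‖ := f.le_opNorm _
      _ = ‖u‖ := by rw [hf1, one_mul]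
  have hmain : ‖w‖ ≤ ‖u‖ + s * (‖w‖ * v + s * ‖u‖) := by
    have h1 : RCLike.re (f w) = RCLike.re (f u) + s * RCLike.re (f (C u)) := by
      rw [hfwsplit, map_add]
      congr 1
      rw [← RCLike.real_smul_eq_coe_mul, RCLike.smul_re]
    have h2 := mul_le_mul_of_nonneg_left hfCu_re hs0.le
    linarith [hrew, h1, hfu]
  have hw_upper : ‖w‖ ≤ (1 + s) * ‖u‖ := by
    calc ‖w‖ ≤ ‖u‖ + ‖(s:𝕜) • C u‖ := norm_add_le _ _
      _ = ‖u‖ + s * ‖C u‖ := by rw [norm_smul, hs_norm]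
      _ ≤ (1 + s) * ‖u‖ := by nlinarith
  nlinarith [mul_le_mul_of_nonneg_left hw_upper (mul_nonneg hs0.le hv0),
    mul_le_mul_of_nonneg_right hv1 (mul_nonneg (mul_nonneg hs0.le hs0.le) (norm_nonneg u)),
    norm_nonneg u]

end Aux

section Aux2
variable {𝕜 : Type*} [RCLike 𝕜] {X : Type*} [NormedAddCommGroup X] [NormedSpace 𝕜 X]

lemma re_state_bound (C : X →L[𝕜] X) (hC : ‖C‖ ≤ 1)
    (ψ : (X →L[𝕜] X) →L[𝕜] 𝕜) (hψ : ‖ψ‖ ≤ 1) (hid : ψ (ContinuousLinearMap.id 𝕜 X) = 1) :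
    RCLike.re (ψ C) ≤ numRadius 𝕜 C := by
  set v := numRadius 𝕜 C with hv
  have hv0 : 0 ≤ v := numRadius_nonneg C
  have key : ∀ s : ℝ, 0 < s → s < 1 → RCLike.re (ψ C) ≤ v + 2 * s := by
    intro s hs0 hs1
    have hD := norm_id_add_smul_le C hC hs0 hs1
    set D := ContinuousLinearMap.id 𝕜 X + (s : 𝕜) • C with hDdef
    have h1 : ψ D = 1 + (s : 𝕜) * ψ C := by
      rw [hDdef, map_add, map_smul, hid, smul_eq_mul]
    have h2 : RCLike.re (ψ D) = 1 + s * RCLike.re (ψ C) := by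
      rw [h1, map_add, RCLike.one_re]
      congr 1
      rw [← RCLike.real_smul_eq_coe_mul, RCLike.smul_re]
    have h3 : RCLike.re (ψ D) ≤ ‖ψ D‖ := RCLike.re_le_norm _
    have h4 : ‖ψ D‖ ≤ ‖D‖ := by
      calc ‖ψ D‖ ≤ ‖ψ‖ * ‖D‖ := ψ.le_opNorm _
        _ ≤ 1 * ‖D‖ := mul_le_mul_of_nonneg_right hψ (norm_nonneg _)
        _ = ‖D‖ := one_mul _
    have h5 : 1 + s * RCLike.re (ψ C) ≤ 1 + s * v + 2 * s ^ 2 := by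
      rw [← h2]; linarith
    nlinarith [h5, hs0]
  by_contra hcon
  push_neg at hcon
  have hε0 : 0 < RCLike.re (ψ C) - v := by linarith
  have hs := key (min (1 / 2) ((RCLike.re (ψ C) - v) / 4)) (by positivity)
    (by have : min (1 / 2) ((RCLike.re (ψ C) - v) / 4) ≤ 1 / 2 := min_le_left _ _; linarith)
  have h5 : min (1 / 2) ((RCLike.re (ψ C) - v) / 4) ≤ (RCLike.re (ψ C) - v) / 4 :=
    min_le_right _ _
  linarith

lemma state_bound (B : X →L[𝕜] X) (hB : ‖B‖ ≤ 1)
    (ψ : (X →L[𝕜] X) →L[𝕜] 𝕜) (hψ : ‖ψ‖ ≤ 1) (hid : ψ (ContinuousLinearMap.id 𝕜 X) = 1) :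
    ‖ψ B‖ ≤ numRadius 𝕜 B := by
  by_cases h0 : ψ B = 0
  · rw [h0, norm_zero]; exact numRadius_nonneg B
  set z := ψ B with hz
  set l : 𝕜 := (starRingEnd 𝕜) z / ((‖z‖ : ℝ) : 𝕜) with hl
  have hzn : (‖z‖ : ℝ) ≠ 0 := norm_ne_zero_iff.mpr h0
  have hzc : ((‖z‖ : ℝ) : 𝕜) ≠ 0 := by simpa using hzn
  have hlnorm : ‖l‖ = 1 := by
    rw [hl, norm_div, RCLike.norm_conj, RCLike.norm_ofReal, abs_of_nonneg (norm_nonneg z),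
      div_self hzn]
  have hC : ‖l • B‖ ≤ 1 := by rw [norm_smul l B, hlnorm, one_mul]; exact hB
  have h1 : ψ (l • B) = ((‖z‖ : ℝ) : 𝕜) := by
    rw [map_smul, smul_eq_mul, ← hz, hl, div_mul_eq_mul_div, RCLike.conj_mul]
    rw [sq, mul_div_assoc, div_self hzc, mul_one]
  have h2 : RCLike.re (ψ (l • B)) = ‖z‖ := by rw [h1, RCLike.ofReal_re]
  have h3 := re_state_bound (l • B) hC ψ hψ hid
  rw [h2, numRadius_smul_unit B hlnorm] at h3
  exact h3

lemma numRadius_le_of_pairs {W : Type*} [NormedAddCommGroup W] [NormedSpace 𝕜 W]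
    (Φ : W →L[𝕜] W) {c : ℝ} (hc : 0 ≤ c)
    (h : ∀ (T : W) (φ : W →L[𝕜] 𝕜), ‖T‖ = 1 → ‖φ‖ = 1 → φ T = 1 → ‖φ (Φ T)‖ ≤ c) :
    numRadius 𝕜 Φ ≤ c :=
  Real.sSup_le (by rintro r ⟨T, φ, h1, h2, h3, rfl⟩; exact h T φ h1 h2 h3) hc

end Aux2

section Core
variable {𝕜 X Y : Type*} [RCLike 𝕜]
    [NormedAddCommGroup X] [NormedSpace 𝕜 X] [CompleteSpace X]
    [NormedAddCommGroup Y] [NormedSpace 𝕜 Y] [CompleteSpace Y]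

lemma rankOne_mem (Z : Submodule 𝕜 (X →L[𝕜] Y))
    (hfin : ∀ T : X →L[𝕜] Y, FiniteDimensional 𝕜 ↥(LinearMap.range (T : X →ₗ[𝕜] Y)) → T ∈ Z)
    (g : X →L[𝕜] 𝕜) (y : Y) : g.smulRight y ∈ Z := by
  apply hfin
  have hle : LinearMap.range ((g.smulRight y : X →L[𝕜] Y) : X →ₗ[𝕜] Y) ≤
      Submodule.span 𝕜 {y} := by
    rintro - ⟨x, rfl⟩
    show g x • y ∈ Submodule.span 𝕜 {y}
    exact Submodule.smul_mem _ _ (Submodule.mem_span_singleton_self y)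
  haveI : FiniteDimensional 𝕜 ↥(Submodule.span 𝕜 ({y} : Set Y)) :=
    FiniteDimensional.span_of_finite 𝕜 (Set.finite_singleton y)
  exact Submodule.finiteDimensional_of_le hle

lemma exists_unit_vector (W : Type*) [NormedAddCommGroup W] [NormedSpace 𝕜 W] [Nontrivial W] :
    ∃ w : W, ‖w‖ = 1 := by
  obtain ⟨w0, hw0⟩ := exists_ne (0 : W)
  have h : (0:ℝ) < ‖w0‖ := norm_pos_iff.mpr hw0
  refine ⟨((‖w0‖ : ℝ) : 𝕜)⁻¹ • w0, ?_⟩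
  rw [norm_smul, norm_inv, RCLike.norm_ofReal, abs_of_pos h, inv_mul_cancel₀ h.ne']

lemma core_right [Nontrivial X] [Nontrivial Y] (Z : Submodule 𝕜 (X →L[𝕜] Y))
    (hfin : ∀ T : X →L[𝕜] Y, FiniteDimensional 𝕜 ↥(LinearMap.range (T : X →ₗ[𝕜] Y)) → T ∈ Z)
    (hideal : ∀ (A : Y →L[𝕜] Y) (B : X →L[𝕜] X), ∀ T ∈ Z, A.comp (T.comp B) ∈ Z) :
    numIndex 𝕜 ↥Z ≤ numIndex 𝕜 X := by
  letI : Module 𝕜 ↥Z := NormedSpace.toModule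
  have memB : ∀ T ∈ Z, ∀ C : X →L[𝕜] X, T.comp C ∈ Z := fun T hT C => by
    have := hideal (ContinuousLinearMap.id 𝕜 Y) C T hT
    rwa [ContinuousLinearMap.id_comp] at this
  apply le_csInf
  · exact ⟨numRadius 𝕜 (ContinuousLinearMap.id 𝕜 X),
      ContinuousLinearMap.id 𝕜 X, ContinuousLinearMap.norm_id, rfl⟩
  rintro r ⟨B, hB, rfl⟩
  -- the operator Φ : T ↦ T ∘ B on Z
  set ΦL : ↥Z →ₗ[𝕜] ↥Z :=
    { toFun := fun T => ⟨(T : X →L[𝕜] Y).comp B, memB _ T.2 B⟩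
      map_add' := fun T S => Subtype.ext (ContinuousLinearMap.add_comp _ _ _)
      map_smul' := fun a T => Subtype.ext (ContinuousLinearMap.smul_comp a _ _) } with hΦL
  have hbound : ∀ T : ↥Z, ‖ΦL T‖ ≤ 1 * ‖T‖ := fun T => by
    rw [one_mul, Submodule.coe_norm, Submodule.coe_norm]
    calc ‖(T : X →L[𝕜] Y).comp B‖ ≤ ‖(T : X →L[𝕜] Y)‖ * ‖B‖ :=
          ContinuousLinearMap.opNorm_comp_le _ _
      _ = ‖(T : X →L[𝕜] Y)‖ := by rw [hB, mul_one]
  set Φ := ΦL.mkContinuous 1 hbound with hΦ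
  have hΦle : ‖Φ‖ ≤ 1 := ΦL.mkContinuous_norm_le zero_le_one hbound
  have hΦge : 1 ≤ ‖Φ‖ := by
    apply le_of_forall_lt
    intro c hc
    rcases lt_or_ge c 0 with h | h
    · exact h.trans_le (norm_nonneg Φ)
    obtain ⟨x, hx1, hx2⟩ := B.exists_lt_apply_of_lt_opNorm (by rw [hB]; exact hc)
    have hBx : B x ≠ 0 := by
      intro h'
      rw [h', norm_zero] at hx2
      exact absurd hx2 (not_lt.mpr h)
    obtain ⟨g, hg1, hg2⟩ := exists_dual_vector 𝕜 (B x) (norm_ne_zero_iff.mpr hBx)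
    obtain ⟨y, hyn⟩ := exists_unit_vector (𝕜 := 𝕜) Y
    set T0 : X →L[𝕜] Y := g.smulRight y with hT0
    set T : ↥Z := ⟨T0, rankOne_mem Z hfin g y⟩ with hT
    have hTnorm : ‖T‖ = 1 := by
      rw [Submodule.coe_norm]
      show ‖T0‖ = 1
      rw [hT0, ContinuousLinearMap.norm_smulRight_apply, hg1, hyn, one_mul]
    have happ : c < ‖(T0.comp B) x‖ := by
      have : (T0.comp B) x = g (B x) • y := rfl
      rw [this, norm_smul, hg2, hyn, mul_one, RCLike.norm_ofReal, abs_of_nonneg (norm_nonneg _)]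
      exact hx2
    have h2 : ‖(T0.comp B) x‖ ≤ ‖T0.comp B‖ := by
      calc ‖(T0.comp B) x‖ ≤ ‖T0.comp B‖ * ‖x‖ := ContinuousLinearMap.le_opNorm _ _
        _ ≤ ‖T0.comp B‖ * 1 := by
            exact mul_le_mul_of_nonneg_left hx1.le (norm_nonneg _)
        _ = ‖T0.comp B‖ := mul_one _
    have h3 : ‖T0.comp B‖ = ‖Φ T‖ := by
      rw [Submodule.coe_norm]; rfl
    have h4 : ‖Φ T‖ ≤ ‖Φ‖ := by
      calc ‖Φ T‖ ≤ ‖Φ‖ * ‖T‖ := Φ.le_opNorm T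
        _ = ‖Φ‖ := by rw [hTnorm, mul_one]
    linarith
  -- numerical radius comparison
  have hbelow : BddBelow {r : ℝ | ∃ T : ↥Z →L[𝕜] ↥Z, ‖T‖ = 1 ∧ r = numRadius 𝕜 T} :=
    ⟨0, by rintro r ⟨T, -, rfl⟩; exact numRadius_nonneg T⟩
  have h1 : numIndex 𝕜 ↥Z ≤ numRadius 𝕜 Φ :=
    csInf_le hbelow ⟨Φ, le_antisymm hΦle hΦge, rfl⟩
  refine h1.trans ?_
  apply numRadius_le_of_pairs Φ (numRadius_nonneg B)
  intro T φ hTn hφn hφT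
  set ρ : (X →L[𝕜] X) →ₗ[𝕜] ↥Z :=
    { toFun := fun C => ⟨(T : X →L[𝕜] Y).comp C, memB _ T.2 C⟩
      map_add' := fun C D => Subtype.ext (ContinuousLinearMap.comp_add _ _ _)
      map_smul' := fun a C => Subtype.ext (ContinuousLinearMap.comp_smul _ _ _) } with hρ
  have hρb : ∀ C : X →L[𝕜] X, ‖ρ C‖ ≤ 1 * ‖C‖ := fun C => by
    rw [one_mul, Submodule.coe_norm]
    calc ‖(T : X →L[𝕜] Y).comp C‖ ≤ ‖(T : X →L[𝕜] Y)‖ * ‖C‖ :=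
          ContinuousLinearMap.opNorm_comp_le _ _
      _ = 1 * ‖C‖ := by rw [show ‖(T : X →L[𝕜] Y)‖ = 1 from hTn]
      _ = ‖C‖ := one_mul _
  set ρc := ρ.mkContinuous 1 hρb with hρc
  set ψ := φ.comp ρc with hψ
  have hψn : ‖ψ‖ ≤ 1 := by
    calc ‖ψ‖ ≤ ‖φ‖ * ‖ρc‖ := ContinuousLinearMap.opNorm_comp_le _ _
      _ ≤ 1 * 1 := by
          apply mul_le_mul (le_of_eq hφn) (ρ.mkContinuous_norm_le zero_le_one hρb)
            (norm_nonneg _) zero_le_one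
      _ = 1 := one_mul _
  have hψid : ψ (ContinuousLinearMap.id 𝕜 X) = 1 := by
    have hval : ρc (ContinuousLinearMap.id 𝕜 X) = T :=
      Subtype.ext (ContinuousLinearMap.comp_id _)
    show φ (ρc (ContinuousLinearMap.id 𝕜 X)) = 1
    rw [hval, hφT]
  have hmain := state_bound B (le_of_eq hB) ψ hψn hψid
  have heq : ψ B = φ (Φ T) := rfl
  rwa [heq] at hmain

lemma core_left [Nontrivial X] [Nontrivial Y] (Z : Submodule 𝕜 (X →L[𝕜] Y))
    (hfin : ∀ T : X →L[𝕜] Y, FiniteDimensional 𝕜 ↥(LinearMap.range (T : X →ₗ[𝕜] Y)) → T ∈ Z)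
    (hideal : ∀ (A : Y →L[𝕜] Y) (B : X →L[𝕜] X), ∀ T ∈ Z, A.comp (T.comp B) ∈ Z) :
    numIndex 𝕜 ↥Z ≤ numIndex 𝕜 Y := by
  letI : Module 𝕜 ↥Z := NormedSpace.toModule
  have memA : ∀ T ∈ Z, ∀ C : Y →L[𝕜] Y, C.comp T ∈ Z := fun T hT C => by
    have := hideal C (ContinuousLinearMap.id 𝕜 X) T hT
    rwa [ContinuousLinearMap.comp_id] at this
  apply le_csInf
  · exact ⟨numRadius 𝕜 (ContinuousLinearMap.id 𝕜 Y),
      ContinuousLinearMap.id 𝕜 Y, ContinuousLinearMap.norm_id, rfl⟩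
  rintro r ⟨A, hA, rfl⟩
  set ΦL : ↥Z →ₗ[𝕜] ↥Z :=
    { toFun := fun T => ⟨A.comp (T : X →L[𝕜] Y), memA _ T.2 A⟩
      map_add' := fun T S => Subtype.ext (ContinuousLinearMap.comp_add _ _ _)
      map_smul' := fun a T => Subtype.ext (ContinuousLinearMap.comp_smul _ _ _) } with hΦL
  have hbound : ∀ T : ↥Z, ‖ΦL T‖ ≤ 1 * ‖T‖ := fun T => by
    rw [one_mul, Submodule.coe_norm, Submodule.coe_norm]
    calc ‖A.comp (T : X →L[𝕜] Y)‖ ≤ ‖A‖ * ‖(T : X →L[𝕜] Y)‖ :=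
          ContinuousLinearMap.opNorm_comp_le _ _
      _ = ‖(T : X →L[𝕜] Y)‖ := by rw [hA, one_mul]
  set Φ := ΦL.mkContinuous 1 hbound with hΦ
  have hΦle : ‖Φ‖ ≤ 1 := ΦL.mkContinuous_norm_le zero_le_one hbound
  have hΦge : 1 ≤ ‖Φ‖ := by
    apply le_of_forall_lt
    intro c hc
    rcases lt_or_ge c 0 with h | h
    · exact h.trans_le (norm_nonneg Φ)
    obtain ⟨y, hy1, hy2⟩ := A.exists_lt_apply_of_lt_opNorm (by rw [hA]; exact hc)
    obtain ⟨x0, hx0⟩ := exists_ne (0 : X)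
    have hx0n : (0:ℝ) < ‖x0‖ := norm_pos_iff.mpr hx0
    obtain ⟨f, hf1, hf2⟩ := exists_dual_vector 𝕜 x0 (norm_ne_zero_iff.mpr hx0)
    set T0 : X →L[𝕜] Y := f.smulRight y with hT0
    set T : ↥Z := ⟨T0, rankOne_mem Z hfin f y⟩ with hT
    have hTnorm : ‖T‖ ≤ 1 := by
      rw [Submodule.coe_norm]
      show ‖T0‖ ≤ 1
      rw [hT0, ContinuousLinearMap.norm_smulRight_apply, hf1, one_mul]
      exact hy1.le
    have happ : ‖x0‖ * ‖A y‖ = ‖(A.comp T0) x0‖ := by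
      have h1 : (A.comp T0) x0 = f x0 • A y := by
        show A (f x0 • y) = f x0 • A y
        rw [map_smul]
      rw [h1, norm_smul, hf2, RCLike.norm_ofReal, abs_of_pos hx0n]
    have h2 : ‖A y‖ ≤ ‖A.comp T0‖ := by
      have h3 : ‖(A.comp T0) x0‖ ≤ ‖A.comp T0‖ * ‖x0‖ := ContinuousLinearMap.le_opNorm _ _
      rw [← happ] at h3
      nlinarith
    have h3 : ‖A.comp T0‖ = ‖Φ T‖ := by rw [Submodule.coe_norm]; rfl
    have h4 : ‖Φ T‖ ≤ ‖Φ‖ := by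
      calc ‖Φ T‖ ≤ ‖Φ‖ * ‖T‖ := Φ.le_opNorm T
        _ ≤ ‖Φ‖ * 1 := mul_le_mul_of_nonneg_left hTnorm (norm_nonneg Φ)
        _ = ‖Φ‖ := mul_one _
    linarith
  have hbelow : BddBelow {r : ℝ | ∃ T : ↥Z →L[𝕜] ↥Z, ‖T‖ = 1 ∧ r = numRadius 𝕜 T} :=
    ⟨0, by rintro r ⟨T, -, rfl⟩; exact numRadius_nonneg T⟩
  have h1 : numIndex 𝕜 ↥Z ≤ numRadius 𝕜 Φ :=
    csInf_le hbelow ⟨Φ, le_antisymm hΦle hΦge, rfl⟩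
  refine h1.trans ?_
  apply numRadius_le_of_pairs Φ (numRadius_nonneg A)
  intro T φ hTn hφn hφT
  set ρ : (Y →L[𝕜] Y) →ₗ[𝕜] ↥Z :=
    { toFun := fun C => ⟨C.comp (T : X →L[𝕜] Y), memA _ T.2 C⟩
      map_add' := fun C D => Subtype.ext (ContinuousLinearMap.add_comp _ _ _)
      map_smul' := fun a C => Subtype.ext (ContinuousLinearMap.smul_comp a _ _) } with hρ
  have hρb : ∀ C : Y →L[𝕜] Y, ‖ρ C‖ ≤ 1 * ‖C‖ := fun C => by
    rw [one_mul, Submodule.coe_norm]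
    calc ‖C.comp (T : X →L[𝕜] Y)‖ ≤ ‖C‖ * ‖(T : X →L[𝕜] Y)‖ :=
          ContinuousLinearMap.opNorm_comp_le _ _
      _ = ‖C‖ * 1 := by rw [show ‖(T : X →L[𝕜] Y)‖ = 1 from hTn]
      _ = ‖C‖ := mul_one _
  set ρc := ρ.mkContinuous 1 hρb with hρc
  set ψ := φ.comp ρc with hψ
  have hψn : ‖ψ‖ ≤ 1 := by
    calc ‖ψ‖ ≤ ‖φ‖ * ‖ρc‖ := ContinuousLinearMap.opNorm_comp_le _ _
      _ ≤ 1 * 1 := by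
          apply mul_le_mul (le_of_eq hφn) (ρ.mkContinuous_norm_le zero_le_one hρb)
            (norm_nonneg _) zero_le_one
      _ = 1 := one_mul _
  have hψid : ψ (ContinuousLinearMap.id 𝕜 Y) = 1 := by
    have hval : ρc (ContinuousLinearMap.id 𝕜 Y) = T :=
      Subtype.ext (ContinuousLinearMap.id_comp _)
    show φ (ρc (ContinuousLinearMap.id 𝕜 Y)) = 1
    rw [hval, hφT]
  have hmain := state_bound A (le_of_eq hA) ψ hψn hψid
  have heq : ψ A = φ (Φ T) := rfl
  rwa [heq] at hmain

end Core

lemma numIndex_of_subsingleton {𝕜 W : Type*} [RCLike 𝕜] [NormedAddCommGroup W]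
    [NormedSpace 𝕜 W] [Subsingleton W] : numIndex 𝕜 W = 0 := by
  unfold numIndex
  have hempty : {r : ℝ | ∃ T : W →L[𝕜] W, ‖T‖ = 1 ∧ r = numRadius 𝕜 T} = ∅ := by
    ext r
    simp only [Set.mem_setOf_eq, Set.mem_empty_iff_false, iff_false, not_exists]
    intro T h
    obtain ⟨hT, -⟩ := h
    have hT0 : T = 0 := by ext w; exact Subsingleton.elim _ _
    rw [hT0, norm_zero] at hT
    exact one_ne_zero hT.symm
  rw [hempty, Real.sInf_empty]

/-- For every operator ideal `Z ⊆ L(X,Y)` (closed subspace, containing all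
finite-rank operators, stable by composition on both sides), `n(Z) ≤ min{n(X), n(Y)}`. -/
theorem numIndex_operatorIdeal_le_min {𝕜 X Y : Type*} [RCLike 𝕜]
    [NormedAddCommGroup X] [NormedSpace 𝕜 X] [CompleteSpace X]
    [NormedAddCommGroup Y] [NormedSpace 𝕜 Y] [CompleteSpace Y]
    (Z : Submodule 𝕜 (X →L[𝕜] Y)) (hclosed : IsClosed (Z : Set (X →L[𝕜] Y)))
    (hfin : ∀ T : X →L[𝕜] Y, FiniteDimensional 𝕜 ↥(LinearMap.range (T : X →ₗ[𝕜] Y)) → T ∈ Z)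
    (hideal : ∀ (A : Y →L[𝕜] Y) (B : X →L[𝕜] X), ∀ T ∈ Z, A.comp (T.comp B) ∈ Z) :
    numIndex 𝕜 ↥Z ≤ min (numIndex 𝕜 X) (numIndex 𝕜 Y) := by
  by_cases hsub : Subsingleton (X →L[𝕜] Y)
  · haveI : Subsingleton ↥Z := ⟨fun a b => Subtype.ext (Subsingleton.elim _ _)⟩
    rw [numIndex_of_subsingleton]
    exact le_min (numIndex_nonneg 𝕜 X) (numIndex_nonneg 𝕜 Y)
  · haveI hX : Nontrivial X := by
      by_contra h
      haveI := not_nontrivial_iff_subsingleton.mp h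
      exact hsub ⟨fun f g => by ext x; rw [Subsingleton.elim x 0, map_zero, map_zero]⟩
    haveI hY : Nontrivial Y := by
      by_contra h
      haveI := not_nontrivial_iff_subsingleton.mp h
      exact hsub ⟨fun f g => by ext x; exact Subsingleton.elim _ _⟩
    exact le_min (core_right Z hfin hideal) (core_left Z hfin hideal)
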